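/- Let p be a prime and let g be an element of SL(2, ℚ_p), the special linear group of 2×2 matrices of determinant 1 over the p-adic numbers, with its topology induced from the matrix topology. Then the identity matrix lies in the closure of the conjugacy class {h·g·h⁻¹ : h ∈ SL(2, ℚ_p)} if and only if g is unipotent, i.e. (g − 1)² = 0 as a 2×2 matrix over ℚ_p. -/

import Mathlib

open Matrix Filter

/-- The topology on the special linear group induced from the matrix topology. -/
instance specialLinearGroupTopology {n : Type*} [DecidableEq n] [Fintype n]
    {R : Type*} [CommRing R] [TopologicalSpace R] :
    TopologicalSpace (SpecialLinearGroup n R) :=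
  TopologicalSpace.induced (fun g => (g : Matrix n n R)) inferInstance

section aux

variable (p : ℕ) [Fact p.Prime]

/-- Upper triangular unipotent matrix in SL2. -/
noncomputable def myU (b : ℚ_[p]) : SpecialLinearGroup (Fin 2) ℚ_[p] :=
  ⟨!![1, b; 0, 1], by simp [Matrix.det_fin_two_of]⟩

/-- Diagonal matrix diag(t, t⁻¹) in SL2, for t ≠ 0. -/
noncomputable def myD (t : ℚ_[p]) (ht : t ≠ 0) : SpecialLinearGroup (Fin 2) ℚ_[p] :=
  ⟨!![t, 0; 0, t⁻¹], by simp [Matrix.det_fin_two_of, ht]⟩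

lemma myD_conj (t : ℚ_[p]) (ht : t ≠ 0) (b : ℚ_[p]) :
    myD p t ht * myU p b * (myD p t ht)⁻¹ = myU p (t ^ 2 * b) := by
  apply Subtype.ext
  simp only [Matrix.SpecialLinearGroup.coe_mul, Matrix.SpecialLinearGroup.coe_inv]
  show !![t, 0; 0, t⁻¹] * !![1, b; 0, 1] * adjugate !![t, 0; 0, t⁻¹]
      = !![1, t ^ 2 * b; 0, 1]
  rw [Matrix.adjugate_fin_two_of]
  ext i j
  fin_cases i <;> fin_cases j
  all_goals try simp [Matrix.mul_apply, Fin.sum_univ_two]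
  all_goals try field_simp
  all_goals try ring

lemma tendsto_myU : Tendsto (fun b : ℚ_[p] => myU p b) (nhds 0)
    (nhds (1 : SpecialLinearGroup (Fin 2) ℚ_[p])) := by
  rw [nhds_induced (fun g : SpecialLinearGroup (Fin 2) ℚ_[p] =>
      (g : Matrix (Fin 2) (Fin 2) ℚ_[p])), Filter.tendsto_comap_iff]
  have hone : ((1 : SpecialLinearGroup (Fin 2) ℚ_[p]) : Matrix (Fin 2) (Fin 2) ℚ_[p])
      = !![1, (0:ℚ_[p]); 0, 1] := by
    rw [Matrix.SpecialLinearGroup.coe_one, Matrix.one_fin_two]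
  rw [hone]
  have hcont : Continuous fun b : ℚ_[p] => !![(1:ℚ_[p]), b; 0, 1] := by
    apply continuous_matrix
    intro i j
    fin_cases i <;> fin_cases j <;> simp <;> continuity
  exact hcont.tendsto 0

/-- If the trace is 2, then g is conjugate to an upper unipotent. -/
lemma conj_to_unipotent (g : SpecialLinearGroup (Fin 2) ℚ_[p])
    (htr : (g : Matrix (Fin 2) (Fin 2) ℚ_[p]) 0 0 + (g : Matrix (Fin 2) (Fin 2) ℚ_[p]) 1 1 = 2) :
    ∃ (M : SpecialLinearGroup (Fin 2) ℚ_[p]) (b : ℚ_[p]), g = M * myU p b * M⁻¹ := by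
  set a := (g : Matrix (Fin 2) (Fin 2) ℚ_[p]) 0 0 with ha
  set bb := (g : Matrix (Fin 2) (Fin 2) ℚ_[p]) 0 1 with hb
  set c := (g : Matrix (Fin 2) (Fin 2) ℚ_[p]) 1 0 with hc
  set d := (g : Matrix (Fin 2) (Fin 2) ℚ_[p]) 1 1 with hd
  have hdet : a * d - bb * c = 1 := by
    have := g.det_coe; rwa [Matrix.det_fin_two] at this
  have hg : (g : Matrix (Fin 2) (Fin 2) ℚ_[p]) = !![a, bb; c, d] := by
    ext i j; fin_cases i <;> fin_cases j <;> rfl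
  by_cases hc0 : c = 0
  · have ha1 : a = 1 := by
      have h2 : (a - 1) ^ 2 = 0 := by linear_combination (-1) * hdet + a * htr + (-bb) * hc0
      have := pow_eq_zero_iff (n := 2) (by norm_num) |>.mp h2
      linear_combination this
    have hd1 : d = 1 := by linear_combination htr - ha1
    refine ⟨1, bb, ?_⟩
    have hgu : g = myU p bb := by
      apply Subtype.ext; rw [hg, ha1, hd1, hc0]; rfl
    rw [hgu, inv_one, mul_one, one_mul]
  · refine ⟨⟨!![(1-a)/c, 1; -1, 0], by rw [Matrix.det_fin_two_of]; simp⟩, -c, ?_⟩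
    apply Subtype.ext
    simp only [Matrix.SpecialLinearGroup.coe_mul, Matrix.SpecialLinearGroup.coe_inv]
    show (g : Matrix (Fin 2) (Fin 2) ℚ_[p]) =
      !![(1-a)/c, 1; -1, 0] * !![1, -c; 0, 1] * adjugate !![(1-a)/c, 1; -1, 0]
    rw [Matrix.adjugate_fin_two_of, hg]
    ext i j
    fin_cases i <;> fin_cases j <;> simp [Matrix.mul_apply, Fin.sum_univ_two]
    all_goals field_simp
    · ring
    · linear_combination (-1 : ℚ_[p]) * hdet + a * htr
    · linear_combination htr

lemma trace_eq_two_of_unipotent (g : SpecialLinearGroup (Fin 2) ℚ_[p])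
    (h : ((g : Matrix (Fin 2) (Fin 2) ℚ_[p]) - 1) ^ 2 = 0) :
    (g : Matrix (Fin 2) (Fin 2) ℚ_[p]) 0 0 + (g : Matrix (Fin 2) (Fin 2) ℚ_[p]) 1 1 = 2 := by
  set a := (g : Matrix (Fin 2) (Fin 2) ℚ_[p]) 0 0
  set bb := (g : Matrix (Fin 2) (Fin 2) ℚ_[p]) 0 1
  set c := (g : Matrix (Fin 2) (Fin 2) ℚ_[p]) 1 0
  set d := (g : Matrix (Fin 2) (Fin 2) ℚ_[p]) 1 1
  have hdet : a * d - bb * c = 1 := by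
    have := g.det_coe; rwa [Matrix.det_fin_two] at this
  have e00 := congrFun (congrFun h 0) 0
  have e01 := congrFun (congrFun h 0) 1
  have e10 := congrFun (congrFun h 1) 0
  have e11 := congrFun (congrFun h 1) 1
  simp only [pow_two, Matrix.mul_apply, Fin.sum_univ_two, Matrix.sub_apply, Matrix.one_apply,
    Matrix.zero_apply] at e00 e01 e10 e11
  norm_num at e00 e01 e10 e11
  have hs : (a + d - 2) * ((a + d - 2) + 2) = 0 := by
    linear_combination e00 + e11 + 2 * hdet
  rcases mul_eq_zero.mp hs with h' | h'
  · linear_combination h'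
  · -- a + d = 0; then b = c = 0, a = d = 1, contradiction gives a + d = 2 anyway
    have hbb : bb = 0 := by
      have hb2 : bb * (a + d - 2) = 0 := by linear_combination e01
      have : bb * (-2 : ℚ_[p]) = 0 := by linear_combination hb2 - bb * h'
      linear_combination (-1/2 : ℚ_[p]) * this
    have hcc : c = 0 := by
      have hc2 : c * (a + d - 2) = 0 := by linear_combination e10
      have : c * (-2 : ℚ_[p]) = 0 := by linear_combination hc2 - c * h'
      linear_combination (-1/2 : ℚ_[p]) * this
    have ha1 : a = 1 := by
      have h2 : (a - 1) ^ 2 = 0 := by linear_combination e00 - c * hbb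
      have := pow_eq_zero_iff (n := 2) (by norm_num) |>.mp h2
      linear_combination this
    have hd1 : d = 1 := by
      have h2 : (d - 1) ^ 2 = 0 := by linear_combination e11 - bb * hcc
      have := pow_eq_zero_iff (n := 2) (by norm_num) |>.mp h2
      linear_combination this
    rw [ha1, hd1]; norm_num

lemma unipotent_of_trace_eq_two (g : SpecialLinearGroup (Fin 2) ℚ_[p])
    (htr : (g : Matrix (Fin 2) (Fin 2) ℚ_[p]) 0 0 + (g : Matrix (Fin 2) (Fin 2) ℚ_[p]) 1 1 = 2) :
    ((g : Matrix (Fin 2) (Fin 2) ℚ_[p]) - 1) ^ 2 = 0 := by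
  set a := (g : Matrix (Fin 2) (Fin 2) ℚ_[p]) 0 0
  set bb := (g : Matrix (Fin 2) (Fin 2) ℚ_[p]) 0 1
  set c := (g : Matrix (Fin 2) (Fin 2) ℚ_[p]) 1 0
  set d := (g : Matrix (Fin 2) (Fin 2) ℚ_[p]) 1 1
  have hdet : a * d - bb * c = 1 := by
    have := g.det_coe; rwa [Matrix.det_fin_two] at this
  ext i j
  fin_cases i <;> fin_cases j <;>
    · simp only [pow_two, Matrix.mul_apply, Fin.sum_univ_two, Matrix.sub_apply, Matrix.one_apply,
        Matrix.zero_apply]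
      norm_num
      first
        | linear_combination (-1) * hdet + a * htr
        | linear_combination bb * htr
        | linear_combination c * htr
        | linear_combination (-1) * hdet + d * htr

end aux

/-- For `g ∈ SL(2, ℚ_p)`, the identity lies in the closure of the conjugacy class
`{h·g·h⁻¹ : h ∈ SL(2, ℚ_p)}` if and only if `g` is unipotent, i.e. `(g - 1)² = 0`. -/
theorem stmt_1 (p : ℕ) [Fact p.Prime] (g : SpecialLinearGroup (Fin 2) ℚ_[p]) :
    (1 : SpecialLinearGroup (Fin 2) ℚ_[p]) ∈
        closure {x : SpecialLinearGroup (Fin 2) ℚ_[p] |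
          ∃ h : SpecialLinearGroup (Fin 2) ℚ_[p], x = h * g * h⁻¹} ↔
      ((g : Matrix (Fin 2) (Fin 2) ℚ_[p]) - 1) ^ 2 = 0 := by
  constructor
  · -- closure → unipotent, via continuity of trace
    intro hmem
    apply unipotent_of_trace_eq_two
    have hclosed : IsClosed {x : SpecialLinearGroup (Fin 2) ℚ_[p] |
        Matrix.trace (x : Matrix (Fin 2) (Fin 2) ℚ_[p])
          = Matrix.trace (g : Matrix (Fin 2) (Fin 2) ℚ_[p])} :=
      isClosed_eq (Continuous.matrix_trace continuous_induced_dom) continuous_const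
    have hsub : {x : SpecialLinearGroup (Fin 2) ℚ_[p] |
          ∃ h : SpecialLinearGroup (Fin 2) ℚ_[p], x = h * g * h⁻¹} ⊆
        {x : SpecialLinearGroup (Fin 2) ℚ_[p] |
          Matrix.trace (x : Matrix (Fin 2) (Fin 2) ℚ_[p])
            = Matrix.trace (g : Matrix (Fin 2) (Fin 2) ℚ_[p])} := by
      rintro x ⟨h, rfl⟩
      show Matrix.trace (((h * g) * h⁻¹ : SpecialLinearGroup (Fin 2) ℚ_[p]) :
        Matrix (Fin 2) (Fin 2) ℚ_[p]) = _
      simp only [Matrix.SpecialLinearGroup.coe_mul]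
      rw [Matrix.trace_mul_comm, ← mul_assoc]
      have hih : ((h⁻¹ : SpecialLinearGroup (Fin 2) ℚ_[p]) : Matrix (Fin 2) (Fin 2) ℚ_[p]) *
          (h : Matrix (Fin 2) (Fin 2) ℚ_[p]) = 1 := by
        rw [← Matrix.SpecialLinearGroup.coe_mul, inv_mul_cancel,
          Matrix.SpecialLinearGroup.coe_one]
      rw [hih, one_mul]
    have hT := closure_minimal hsub hclosed hmem
    simp only [Set.mem_setOf_eq] at hT
    rw [Matrix.trace_fin_two, Matrix.trace_fin_two, Matrix.SpecialLinearGroup.coe_one] at hT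
    simp [Matrix.one_apply] at hT
    linear_combination (-1 : ℚ_[p]) * hT
  · -- unipotent → closure
    intro hu
    have htr := trace_eq_two_of_unipotent p g hu
    obtain ⟨M, b, hM⟩ := conj_to_unipotent p g htr
    have hp0 : (p : ℚ_[p]) ≠ 0 :=
      Nat.cast_ne_zero.mpr (Fact.out (p := p.Prime)).ne_zero
    have hpn : ∀ n : ℕ, ((p : ℚ_[p]) ^ n) ≠ 0 := fun n => pow_ne_zero n hp0
    set seq : ℕ → SpecialLinearGroup (Fin 2) ℚ_[p] :=
      fun n => (myD p ((p : ℚ_[p]) ^ n) (hpn n) * M⁻¹) * g *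
        (myD p ((p : ℚ_[p]) ^ n) (hpn n) * M⁻¹)⁻¹ with hseq
    have hmemS : ∀ n, seq n ∈ {x : SpecialLinearGroup (Fin 2) ℚ_[p] |
        ∃ h : SpecialLinearGroup (Fin 2) ℚ_[p], x = h * g * h⁻¹} :=
      fun n => ⟨_, rfl⟩
    have hval : ∀ n, seq n = myU p ((((p : ℚ_[p]) ^ n)) ^ 2 * b) := by
      intro n
      rw [hseq]
      simp only
      rw [hM, ← myD_conj p ((p : ℚ_[p]) ^ n) (hpn n) b]
      group
    have htend : Tendsto seq atTop (nhds (1 : SpecialLinearGroup (Fin 2) ℚ_[p])) := by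
      have h2 : Tendsto (fun n : ℕ => (((p : ℚ_[p]) ^ n)) ^ 2 * b) atTop (nhds 0) := by
        have h3 : Tendsto (fun n : ℕ => ((p : ℚ_[p]) ^ n)) atTop (nhds 0) :=
          tendsto_pow_atTop_nhds_zero_of_norm_lt_one Padic.norm_p_lt_one
        have := (h3.mul h3).mul_const b
        simpa [pow_two, mul_assoc] using this
      have := (tendsto_myU p).comp h2
      convert this using 1
      funext n; exact hval n
    exact mem_closure_of_tendsto htend (Eventually.of_forall hmemS)
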